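/- Let v : [t_{n-1}, t_n] → ℝ be r-times continuously differentiable for r ∈ {1, 2}, and let Π⁻v be the affine function with Π⁻v(t_n) = v(t_n) and mean value over [t_{n-1}, t_n] equal to that of v. Then sup_{t ∈ [t_{n-1},t_n]} |Π⁻v(t) - v(t)| ≤ (4 - r)·k_n^{r-1}·∫_{t_{n-1}}^{t_n} |v^{(r)}(t)| dt ≤ (4 - r)·k_n^r·sup_{t ∈ [t_{n-1},t_n]} |v^{(r)}(t)|, where k_n = t_n - t_{n-1}. -/

import Mathlib

open intervalIntegral Set

lemma ftcEq (a b : ℝ) (f f' : ℝ → ℝ)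
    (hf : ContinuousOn f (Set.Icc a b)) (hf' : ContinuousOn f' (Set.Icc a b))
    (hd : ∀ x ∈ Set.Ioo a b, HasDerivAt f (f' x) x)
    {t : ℝ} (ht : t ∈ Set.Icc a b) :
    ∫ s in t..b, f' s = f b - f t := by
  apply intervalIntegral.integral_eq_sub_of_hasDeriv_right_of_le ht.2
    (hf.mono (Set.Icc_subset_Icc ht.1 le_rfl))
  · intro x hx
    exact (hd x (Set.Ioo_subset_Ioo ht.1 le_rfl hx)).hasDerivWithinAt
  · exact ((hf'.mono (Set.Icc_subset_Icc ht.1 le_rfl)).mono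
      (by rw [Set.uIcc_of_le ht.2])).intervalIntegrable

lemma ftcAbs (a b : ℝ) (f f' : ℝ → ℝ)
    (hf : ContinuousOn f (Set.Icc a b)) (hf' : ContinuousOn f' (Set.Icc a b))
    (hd : ∀ x ∈ Set.Ioo a b, HasDerivAt f (f' x) x)
    {t : ℝ} (ht : t ∈ Set.Icc a b) :
    |f b - f t| ≤ ∫ s in a..b, |f' s| := by
  rw [← ftcEq a b f f' hf hf' hd ht]
  calc |∫ s in t..b, f' s| ≤ ∫ s in t..b, |f' s| :=
        intervalIntegral.abs_integral_le_integral_abs ht.2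
    _ ≤ ∫ s in a..b, |f' s| := by
        apply intervalIntegral.integral_mono_interval ht.1 ht.2 le_rfl
        · exact Filter.Eventually.of_forall fun x => abs_nonneg _
        · exact (hf'.abs.mono (by rw [Set.uIcc_of_le (ht.1.trans ht.2)])).intervalIntegrable

theorem stmt6 (a b : ℝ) (hab : a < b) (r : ℕ) (hr : r = 1 ∨ r = 2)
    (v : ℝ → ℝ) (hv : ContDiffOn ℝ r v (Set.Icc a b)) (S : ℝ)
    (hS : ∀ s ∈ Set.Icc a b, |iteratedDerivWithin r v (Set.Icc a b) s| ≤ S) :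
    (∀ t ∈ Set.Icc a b,
        |(v b + ((v b - (b - a)⁻¹ * ∫ s in a..b, v s) / ((b - a) / 2)) * (t - b)) - v t|
          ≤ (4 - (r : ℝ)) * (b - a) ^ (r - 1)
              * ∫ s in a..b, |iteratedDerivWithin r v (Set.Icc a b) s|)
    ∧ (4 - (r : ℝ)) * (b - a) ^ (r - 1)
          * (∫ s in a..b, |iteratedDerivWithin r v (Set.Icc a b) s|)
        ≤ (4 - (r : ℝ)) * (b - a) ^ r * S := by
  have hab' : a ≤ b := hab.le
  have hk : (0:ℝ) < b - a := sub_pos.mpr hab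
  have hk0 : (b - a) ≠ 0 := ne_of_gt hk
  have hudiff : UniqueDiffOn ℝ (Set.Icc a b) := uniqueDiffOn_Icc hab
  have hr1 : (1:ℕ) ≤ r := by rcases hr with h | h <;> omega
  have hvc : ContinuousOn v (Set.Icc a b) := hv.continuousOn
  have hvint : IntervalIntegrable v MeasureTheory.volume a b :=
    (hvc.mono (by rw [Set.uIcc_of_le hab'])).intervalIntegrable
  have hgc : ContinuousOn (iteratedDerivWithin r v (Set.Icc a b)) (Set.Icc a b) :=
    hv.continuousOn_iteratedDerivWithin le_rfl hudiff
  have hgint : IntervalIntegrable (fun s => |iteratedDerivWithin r v (Set.Icc a b) s|)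
      MeasureTheory.volume a b :=
    (hgc.abs.mono (by rw [Set.uIcc_of_le hab'])).intervalIntegrable
  have habs : (∫ s in a..b, |iteratedDerivWithin r v (Set.Icc a b) s|) ≤ (b - a) * S := by
    calc (∫ s in a..b, |iteratedDerivWithin r v (Set.Icc a b) s|)
        ≤ ∫ _s in a..b, S :=
          intervalIntegral.integral_mono_on hab' hgint intervalIntegrable_const hS
      _ = (b - a) * S := by simp [smul_eq_mul]
  have hInn : 0 ≤ ∫ s in a..b, |iteratedDerivWithin r v (Set.Icc a b) s| :=
    intervalIntegral.integral_nonneg hab' (fun x _ => abs_nonneg _)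
  rcases hr with h | h <;> subst h
  · -- r = 1
    set D := derivWithin v (Set.Icc a b) with hDdef
    have hIcong : (∫ s in a..b, |iteratedDerivWithin 1 v (Set.Icc a b) s|)
        = ∫ s in a..b, |D s| := by
      apply intervalIntegral.integral_congr
      intro x hx
      rw [Set.uIcc_of_le hab'] at hx
      show |iteratedDerivWithin 1 v (Set.Icc a b) x| = |D x|
      rw [iteratedDerivWithin_one]
    set I := ∫ s in a..b, |D s| with hIdef
    have hI0 : 0 ≤ I := hIcong ▸ hInn
    have hDc : ContinuousOn D (Set.Icc a b) := hv.continuousOn_derivWithin hudiff le_rfl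
    have hd : ∀ x ∈ Set.Ioo a b, HasDerivAt v (D x) x := by
      intro x hx
      have h1 : HasDerivWithinAt v (D x) (Set.Icc a b) x :=
        (hv.differentiableOn (by norm_num) x (Set.Ioo_subset_Icc_self hx)).hasDerivWithinAt
      exact h1.hasDerivAt (Filter.mem_of_superset (isOpen_Ioo.mem_nhds hx) Set.Ioo_subset_Icc_self)
    have hbd : ∀ t ∈ Set.Icc a b, |v b - v t| ≤ I := fun t ht => ftcAbs a b v D hvc hDc hd ht
    have hmean : |v b - (b - a)⁻¹ * ∫ s in a..b, v s| ≤ I := by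
      have hint1 : IntervalIntegrable (fun s => |v b - v s|) MeasureTheory.volume a b :=
        (((continuousOn_const.sub hvc).abs).mono (by rw [Set.uIcc_of_le hab'])).intervalIntegrable
      have h2 : |∫ s in a..b, (v b - v s)| ≤ (b - a) * I := by
        calc |∫ s in a..b, (v b - v s)| ≤ ∫ s in a..b, |v b - v s| :=
              intervalIntegral.abs_integral_le_integral_abs hab'
          _ ≤ ∫ _s in a..b, I :=
              intervalIntegral.integral_mono_on hab' hint1 intervalIntegrable_const hbd
          _ = (b - a) * I := by simp [smul_eq_mul]
      have h3 : v b - (b - a)⁻¹ * ∫ s in a..b, v s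
          = (b - a)⁻¹ * ∫ s in a..b, (v b - v s) := by
        rw [intervalIntegral.integral_sub intervalIntegrable_const hvint,
          intervalIntegral.integral_const, smul_eq_mul]
        field_simp
      rw [h3, abs_mul, abs_of_pos (inv_pos.mpr hk)]
      calc (b - a)⁻¹ * |∫ s in a..b, (v b - v s)| ≤ (b - a)⁻¹ * ((b - a) * I) :=
            mul_le_mul_of_nonneg_left h2 (inv_pos.mpr hk).le
        _ = I := by field_simp
    constructor
    · intro t ht
      rw [hIcong]
      have hsplit : (v b + ((v b - (b - a)⁻¹ * ∫ s in a..b, v s) / ((b - a) / 2)) * (t - b)) - v t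
          = (v b - v t) + ((v b - (b - a)⁻¹ * ∫ s in a..b, v s) / ((b - a) / 2)) * (t - b) := by
        ring
      have hB : |((v b - (b - a)⁻¹ * ∫ s in a..b, v s) / ((b - a) / 2)) * (t - b)| ≤ 2 * I := by
        rw [abs_mul, abs_div, abs_of_pos (by linarith : (0:ℝ) < (b - a) / 2),
          abs_of_nonpos (by linarith [ht.2] : t - b ≤ 0)]
        rw [div_mul_eq_mul_div, div_le_iff₀ (by linarith : (0:ℝ) < (b - a) / 2)]
        have h1 := ht.1
        have h2 := ht.2
        nlinarith [hmean, hI0, abs_nonneg (v b - (b - a)⁻¹ * ∫ s in a..b, v s)]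
      calc |(v b + ((v b - (b - a)⁻¹ * ∫ s in a..b, v s) / ((b - a) / 2)) * (t - b)) - v t|
          ≤ |v b - v t| + |((v b - (b - a)⁻¹ * ∫ s in a..b, v s) / ((b - a) / 2)) * (t - b)| := by
            rw [hsplit]; exact abs_add_le _ _
        _ ≤ I + 2 * I := add_le_add (hbd t ht) hB
        _ ≤ (4 - ((1:ℕ) : ℝ)) * (b - a) ^ (1 - 1) * I := by norm_num; linarith
    · push_cast
      norm_num
      nlinarith [habs, hInn]
  · -- r = 2
    set D := derivWithin v (Set.Icc a b) with hDdef
    set G := derivWithin D (Set.Icc a b) with hGdef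
    have hg2 : ∀ x ∈ Set.Icc a b, iteratedDerivWithin 2 v (Set.Icc a b) x = G x := by
      intro x hx
      have h1 : iteratedDerivWithin 2 v (Set.Icc a b) x
          = derivWithin (iteratedDerivWithin 1 v (Set.Icc a b)) (Set.Icc a b) x :=
        by rw [iteratedDerivWithin_succ]
      rw [h1]
      exact derivWithin_congr (fun y hy => congrFun iteratedDerivWithin_one y)
        (congrFun iteratedDerivWithin_one x)
    have hIcong : (∫ s in a..b, |iteratedDerivWithin 2 v (Set.Icc a b) s|)
        = ∫ s in a..b, |G s| := by
      apply intervalIntegral.integral_congr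
      intro x hx
      rw [Set.uIcc_of_le hab'] at hx
      show |iteratedDerivWithin 2 v (Set.Icc a b) x| = |G x|
      rw [hg2 x hx]
    set J := ∫ s in a..b, |G s| with hJdef
    have hJ0 : 0 ≤ J := hIcong ▸ hInn
    have hDc : ContinuousOn D (Set.Icc a b) :=
      hv.continuousOn_derivWithin hudiff (by norm_num)
    have hD1 : ContDiffOn ℝ 1 D (Set.Icc a b) := hv.derivWithin hudiff (by norm_num)
    have hGc : ContinuousOn G (Set.Icc a b) := hD1.continuousOn_derivWithin hudiff le_rfl
    have hd : ∀ x ∈ Set.Ioo a b, HasDerivAt v (D x) x := by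
      intro x hx
      have h1 : HasDerivWithinAt v (D x) (Set.Icc a b) x :=
        (hv.differentiableOn (by norm_num) x (Set.Ioo_subset_Icc_self hx)).hasDerivWithinAt
      exact h1.hasDerivAt (Filter.mem_of_superset (isOpen_Ioo.mem_nhds hx) Set.Ioo_subset_Icc_self)
    have hDd : ∀ x ∈ Set.Ioo a b, HasDerivAt D (G x) x := by
      intro x hx
      have h1 : HasDerivWithinAt D (G x) (Set.Icc a b) x :=
        (hD1.differentiableOn one_ne_zero x (Set.Ioo_subset_Icc_self hx)).hasDerivWithinAt
      exact h1.hasDerivAt (Filter.mem_of_superset (isOpen_Ioo.mem_nhds hx) Set.Ioo_subset_Icc_self)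
    have hDbd : ∀ s ∈ Set.Icc a b, |D b - D s| ≤ J := fun s hs => ftcAbs a b D G hDc hGc hDd hs
    have hR : ∀ t ∈ Set.Icc a b, |v t - v b - D b * (t - b)| ≤ (b - t) * J := by
      intro t ht
      have hsub : Set.Icc t b ⊆ Set.Icc a b := Set.Icc_subset_Icc ht.1 le_rfl
      have hDint : IntervalIntegrable D MeasureTheory.volume t b :=
        ((hDc.mono hsub).mono (by rw [Set.uIcc_of_le ht.2])).intervalIntegrable
      have h1 : v t - v b - D b * (t - b) = -(∫ s in t..b, (D s - D b)) := by
        rw [intervalIntegral.integral_sub hDint intervalIntegrable_const,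
          ftcEq a b v D hvc hDc hd ht, intervalIntegral.integral_const, smul_eq_mul]
        ring
      rw [h1, abs_neg]
      have hint2 : IntervalIntegrable (fun s => |D s - D b|) MeasureTheory.volume t b :=
        ((((hDc.sub continuousOn_const).abs).mono hsub).mono
          (by rw [Set.uIcc_of_le ht.2])).intervalIntegrable
      calc |∫ s in t..b, (D s - D b)| ≤ ∫ s in t..b, |D s - D b| :=
            intervalIntegral.abs_integral_le_integral_abs ht.2
        _ ≤ ∫ _s in t..b, J := by
            apply intervalIntegral.integral_mono_on ht.2 hint2 intervalIntegrable_const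
            intro x hx
            rw [abs_sub_comm]
            exact hDbd x (hsub hx)
        _ = (b - t) * J := by simp [smul_eq_mul]
    have hRc : ContinuousOn (fun s => v s - v b - D b * (s - b)) (Set.Icc a b) :=
      (hvc.sub continuousOn_const).sub
        (continuousOn_const.mul (continuousOn_id.sub continuousOn_const))
    have hIRbd : |∫ s in a..b, (v s - v b - D b * (s - b))| ≤ (b - a) ^ 2 / 2 * J := by
      calc |∫ s in a..b, (v s - v b - D b * (s - b))|
          ≤ ∫ s in a..b, |v s - v b - D b * (s - b)| :=
            intervalIntegral.abs_integral_le_integral_abs hab'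
        _ ≤ ∫ s in a..b, (b - s) * J := by
            apply intervalIntegral.integral_mono_on hab'
              ((hRc.abs.mono (by rw [Set.uIcc_of_le hab'])).intervalIntegrable)
              (((continuous_const.sub continuous_id).mul continuous_const).intervalIntegrable a b) hR
        _ = (b - a) ^ 2 / 2 * J := by
            have hfun : ∀ s : ℝ, (b - s) * J = b * J - J * s := fun s => by ring
            simp_rw [hfun]
            rw [intervalIntegral.integral_sub (g := fun s => J * s) intervalIntegrable_const
              ((continuous_const.mul continuous_id').intervalIntegrable a b),
              intervalIntegral.integral_const, intervalIntegral.integral_const_mul,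
              integral_id, smul_eq_mul]
            ring
    have hIReq : (∫ s in a..b, (v s - v b - D b * (s - b)))
        = (∫ s in a..b, v s) - (b - a) * v b + D b * (b - a) ^ 2 / 2 := by
      have hint1 : IntervalIntegrable (fun s => v s - v b) MeasureTheory.volume a b :=
        hvint.sub intervalIntegrable_const
      have hint2 : IntervalIntegrable (fun s => D b * (s - b)) MeasureTheory.volume a b :=
        (continuous_const.mul (continuous_id'.sub continuous_const)).intervalIntegrable a b
      rw [intervalIntegral.integral_sub hint1 hint2,
        intervalIntegral.integral_sub hvint intervalIntegrable_const,
        intervalIntegral.integral_const_mul,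
        intervalIntegral.integral_sub (continuous_id'.intervalIntegrable a b)
          intervalIntegrable_const,
        integral_id, intervalIntegral.integral_const, intervalIntegral.integral_const,
        smul_eq_mul, smul_eq_mul]
      ring
    have hXbd : |(∫ s in a..b, v s) - (b - a) * v b + D b * (b - a) ^ 2 / 2|
        ≤ (b - a) ^ 2 / 2 * J := hIReq ▸ hIRbd
    constructor
    · intro t ht
      rw [hIcong]
      have hkey : (v b + ((v b - (b - a)⁻¹ * ∫ s in a..b, v s) / ((b - a) / 2)) * (t - b)) - v t
          = -(v t - v b - D b * (t - b))
            + (2 / (b - a) ^ 2)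
              * ((∫ s in a..b, v s) - (b - a) * v b + D b * (b - a) ^ 2 / 2) * (b - t) := by
        field_simp
        ring
      have hA : |-(v t - v b - D b * (t - b))| ≤ (b - t) * J := by
        rw [abs_neg]; exact hR t ht
      have hT : |(2 / (b - a) ^ 2)
          * ((∫ s in a..b, v s) - (b - a) * v b + D b * (b - a) ^ 2 / 2) * (b - t)|
          ≤ (b - t) * J := by
        rw [abs_mul, abs_mul, abs_of_pos (by positivity : (0:ℝ) < 2 / (b - a) ^ 2),
          abs_of_nonneg (by linarith [ht.2] : (0:ℝ) ≤ b - t)]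
        calc 2 / (b - a) ^ 2 * |(∫ s in a..b, v s) - (b - a) * v b + D b * (b - a) ^ 2 / 2|
              * (b - t)
            ≤ 2 / (b - a) ^ 2 * ((b - a) ^ 2 / 2 * J) * (b - t) :=
              mul_le_mul_of_nonneg_right
                (mul_le_mul_of_nonneg_left hXbd (by positivity)) (by linarith [ht.2])
          _ = (b - t) * J := by field_simp
      calc |(v b + ((v b - (b - a)⁻¹ * ∫ s in a..b, v s) / ((b - a) / 2)) * (t - b)) - v t|
          ≤ (b - t) * J + (b - t) * J := by
            rw [hkey]; exact (abs_add_le _ _).trans (add_le_add hA hT)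
        _ ≤ (4 - ((2:ℕ) : ℝ)) * (b - a) ^ (2 - 1) * J := by
            push_cast
            norm_num
            nlinarith [ht.1, ht.2, hJ0]
    · push_cast
      norm_num
      nlinarith [mul_le_mul_of_nonneg_left habs hk.le, hInn, hk]
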